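/- (Proposition 1) Let A ⊆ {1,…,n} and let k be an integer with k > 0 and k + |A| > n. Then h_k applied to the derivations ∂y_i, i ∈ A, annihilates Δ_μ; that is, ∑_{d} ∏_{i∈A} (∂y_i)^{d_i} Δ_μ = 0, where the sum is over all families (d_i)_{i∈A} of nonnegative integers with ∑_{i∈A} d_i = k. -/

import Mathlib

open MvPolynomial

noncomputable section

/-- Partial derivatives with respect to two variables commute. -/
lemma pderiv_pderiv_comm {σ : Type*} (i j : σ) (f : MvPolynomial σ ℚ) :
    pderiv i (pderiv j f) = pderiv j (pderiv i f) := by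
  classical
  rcases eq_or_ne i j with rfl | hij
  · rfl
  · induction f using MvPolynomial.induction_on' with
    | monomial s a =>
      simp only [pderiv_monomial, Finsupp.coe_tsub, Pi.sub_apply, Finsupp.single_apply,
        if_neg hij, if_neg (Ne.symm hij), Nat.sub_zero]
      rw [tsub_tsub, tsub_tsub, add_comm, mul_right_comm]
    | add p q hp hq => simp [hp, hq]

lemma pderiv_commute {σ : Type*} (i j : σ) :
    Commute ((pderiv i).toLinearMap : Module.End ℚ (MvPolynomial σ ℚ))
      (pderiv j).toLinearMap := by
  apply LinearMap.ext
  intro f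
  simpa only [Module.End.mul_apply, Derivation.coeFn_coe] using pderiv_pderiv_comm i j f

/-- The monomial differential operator `∂^d = ∏ᵢ (∂/∂zᵢ)^(dᵢ)`. -/
def Dmon {σ : Type*} [DecidableEq σ] (d : σ →₀ ℕ) :
    Module.End ℚ (MvPolynomial σ ℚ) :=
  d.support.noncommProd
    (fun i => ((pderiv i).toLinearMap : Module.End ℚ (MvPolynomial σ ℚ)) ^ d i)
    fun i _ j _ _ => Commute.pow_pow (pderiv_commute i j) _ _

/-- `P(∂) Q` : the differential operator associated with `P` (substituting `∂/∂zᵢ`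
for each variable `zᵢ`) applied to `Q`. -/
def DP {σ : Type*} [DecidableEq σ] (P Q : MvPolynomial σ ℚ) : MvPolynomial σ ℚ :=
  (AddMonoidAlgebra.coeff P).sum fun d c => c • Dmon d Q

/-- `x`-exponents of the biexponents of the hook `(K+1,1^L)`, listed in lexicographic
order: `(0,0),(0,1),…,(0,K),(1,0),(2,0),…,(L,0)`. -/
def hookP (K L : ℕ) (j : Fin (K + L + 1)) : ℕ :=
  if (j : ℕ) ≤ K then 0 else (j : ℕ) - K

/-- `y`-exponents of the biexponents of the hook `(K+1,1^L)`. -/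
def hookQ (K L : ℕ) (j : Fin (K + L + 1)) : ℕ :=
  if (j : ℕ) ≤ K then (j : ℕ) else 0

/-- `Δ_μ = det (xᵢ^(p_j) yᵢ^(q_j))` for the hook `μ = (K+1,1^L)` of `n = K+L+1`;
the variable `Sum.inl i` is `xᵢ` and `Sum.inr i` is `yᵢ`. -/
def Delta (K L : ℕ) : MvPolynomial (Fin (K + L + 1) ⊕ Fin (K + L + 1)) ℚ :=
  Matrix.det fun i j =>
    X (Sum.inl i) ^ hookP K L j * X (Sum.inr i) ^ hookQ K L j

lemma Dmon_single_add {σ : Type*} [DecidableEq σ] (a : σ) (b : ℕ) (f : σ →₀ ℕ)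
    (ha : a ∉ f.support) (hb : b ≠ 0) :
    Dmon (Finsupp.single a b + f)
      = ((pderiv a).toLinearMap : Module.End ℚ (MvPolynomial σ ℚ)) ^ b * Dmon f := by
  have hsupp : (Finsupp.single a b + f).support = insert a f.support := by
    rw [Finsupp.support_add_eq, Finsupp.support_single_ne_zero a hb]
    · exact rfl
    · rw [Finsupp.support_single_ne_zero a hb]
      simpa using ha
  unfold Dmon
  erw [Finset.noncommProd_congr hsupp (g := fun i =>
      ((pderiv i).toLinearMap : Module.End ℚ (MvPolynomial σ ℚ)) ^ ((Finsupp.single a b + f) i)) (fun x _ => rfl),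
    Finset.noncommProd_insert_of_notMem _ _ _ _ ha]
  congr 1
  · congr 1
    simp [Finsupp.single_eq_same, Finsupp.notMem_support_iff.mp ha]
  · apply Finset.noncommProd_congr rfl
    intro x hx
    have hxa : x ≠ a := fun h => ha (h ▸ hx)
    simp [Finsupp.single_apply, if_neg (Ne.symm hxa)]
lemma descF_aux (m s : ℕ) : (m - 1).descFactorial s * m = m.descFactorial (s+1) := by
  cases m with
  | zero => simp
  | succ m => rw [Nat.succ_descFactorial_succ, Nat.succ_sub_one, mul_comm]

lemma pow_pderiv_monomial {σ : Type*} [DecidableEq σ] (v : σ) (s : ℕ) (u : σ →₀ ℕ) (c : ℚ) :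
    (((pderiv v).toLinearMap : Module.End ℚ (MvPolynomial σ ℚ)) ^ s) (monomial u c)
      = ((u v).descFactorial s) • monomial (u - Finsupp.single v s) c := by
  induction s generalizing u c with
  | zero => simp
  | succ s ih =>
    rw [pow_succ, Module.End.mul_apply]
    have h1 : ((pderiv v).toLinearMap : Module.End ℚ (MvPolynomial σ ℚ)) (monomial u c)
        = monomial (u - Finsupp.single v 1) (c * u v) := by
      simp [pderiv_monomial]
    rw [h1, ih]
    have h2 : ((u - Finsupp.single v 1) : σ →₀ ℕ) v = u v - 1 := by
      rw [Finsupp.tsub_apply, Finsupp.single_eq_same]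
    have h3 : u - Finsupp.single v 1 - Finsupp.single v s = u - Finsupp.single v (s+1) := by
      rw [tsub_tsub, ← Finsupp.single_add, add_comm]
    rw [h2, h3]
    rw [smul_monomial, smul_monomial]
    congr 1
    rw [nsmul_eq_mul, nsmul_eq_mul, ← descF_aux, Nat.cast_mul]
    ring

lemma Dmon_monomial {σ : Type*} [DecidableEq σ] (e u : σ →₀ ℕ) (c : ℚ) :
    Dmon e (monomial u c)
      = (∏ v ∈ e.support, (u v).descFactorial (e v)) • monomial (u - e) c := by
  induction e using Finsupp.induction with
  | zero => simp [Dmon]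
  | single_add a b f ha hb ih =>
    rw [Dmon_single_add a b f ha hb, Module.End.mul_apply, ih, map_nsmul,
      pow_pderiv_monomial]
    have h1 : ((u - f) : σ →₀ ℕ) a = u a := by
      rw [Finsupp.tsub_apply, Finsupp.notMem_support_iff.mp ha, Nat.sub_zero]
    have h2 : u - f - Finsupp.single a b = u - (Finsupp.single a b + f) := by
      rw [tsub_tsub, add_comm]
    have hsupp : (Finsupp.single a b + f).support = insert a f.support := by
      rw [Finsupp.support_add_eq, Finsupp.support_single_ne_zero a hb]
      · exact rfl
      · rw [Finsupp.support_single_ne_zero a hb]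
        simpa using ha
    rw [h1, h2, smul_smul, hsupp, Finset.prod_insert ha, mul_comm]
    congr 1
    congr 1
    · congr 1
      simp [Finsupp.single_eq_same, Finsupp.notMem_support_iff.mp ha]
    · apply Finset.prod_congr rfl
      intro x hx
      have hxa : x ≠ a := fun h => ha (h ▸ hx)
      simp [Finsupp.single_apply, if_neg (Ne.symm hxa)]

abbrev RKL (K L : ℕ) := MvPolynomial (Fin (K+L+1) ⊕ Fin (K+L+1)) ℚ

def Mmat (K L : ℕ) : Matrix (Fin (K+L+1)) (Fin (K+L+1)) (RKL K L) :=
  fun i j => X (Sum.inl i) ^ hookP K L j * X (Sum.inr i) ^ hookQ K L j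

def Mexp (K L : ℕ) (i j : Fin (K+L+1)) : (Fin (K+L+1) ⊕ Fin (K+L+1)) →₀ ℕ :=
  Finsupp.single (Sum.inl i) (hookP K L j) + Finsupp.single (Sum.inr i) (hookQ K L j)

lemma M_mon (K L : ℕ) (i j : Fin (K+L+1)) :
    Mmat K L i j = monomial (Mexp K L i j) 1 := by
  rw [Mmat, Mexp, X_pow_eq_monomial, X_pow_eq_monomial, monomial_mul, one_mul]

lemma DyM (K L : ℕ) (i j : Fin (K+L+1)) (s : ℕ) :
    (((pderiv (Sum.inr i)).toLinearMap : Module.End ℚ (RKL K L)) ^ s) (Mmat K L i j)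
      = (hookQ K L j).descFactorial s •
        monomial (Finsupp.single (Sum.inl i) (hookP K L j)
          + Finsupp.single (Sum.inr i) (hookQ K L j - s)) 1 := by
  have hval : (Mexp K L i j) (Sum.inr i) = hookQ K L j := by
    simp [Mexp, Finsupp.single_apply]
  have hexp : Mexp K L i j - Finsupp.single (Sum.inr i) s
      = Finsupp.single (Sum.inl i) (hookP K L j)
        + Finsupp.single (Sum.inr i) (hookQ K L j - s) := by
    ext v
    rcases v with i' | i' <;>
      simp [Mexp, Finsupp.tsub_apply, Finsupp.single_apply] <;> split_ifs <;> simp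
  rw [M_mon, pow_pderiv_monomial, hval, hexp]

lemma prod_monomial {σ : Type*} [DecidableEq σ] {ι : Type*} (s : Finset ι) (u : ι → (σ →₀ ℕ))
    (c : ι → ℚ) :
    (∏ i ∈ s, monomial (u i) (c i)) = monomial (∑ i ∈ s, u i) (∏ i ∈ s, c i) := by
  induction s using Finset.cons_induction with
  | empty => simp
  | cons a s ha ih =>
    rw [Finset.prod_cons, Finset.sum_cons, ih, monomial_mul, Finset.prod_cons]

lemma lemP (K L : ℕ) (τ : Fin (K+L+1) → Fin (K+L+1)) (d : Fin (K+L+1) →₀ ℕ) :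
    Dmon (Finsupp.mapDomain Sum.inr d) (∏ i, Mmat K L i (τ i))
      = ∏ i, (((pderiv (Sum.inr i)).toLinearMap : Module.End ℚ (RKL K L)) ^ (d i))
          (Mmat K L i (τ i)) := by
  classical
  set U := ∑ i, Mexp K L i (τ i) with hU
  have hUinl : ∀ i, U (Sum.inl i) = hookP K L (τ i) := by
    intro i
    rw [hU, Finset.sum_apply']
    simp [Mexp, Finsupp.single_apply]
  have hUinr : ∀ i, U (Sum.inr i) = hookQ K L (τ i) := by
    intro i
    rw [hU, Finset.sum_apply']
    simp [Mexp, Finsupp.single_apply]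
  have hprod : ∏ i, Mmat K L i (τ i) = monomial U 1 := by
    simp_rw [M_mon]
    rw [prod_monomial]
    simp
    exact hU.symm
  set e := Finsupp.mapDomain Sum.inr d with he
  have hea : ∀ i, e (Sum.inr i) = d i := fun i =>
    Finsupp.mapDomain_apply Sum.inr_injective _ _
  have hel : ∀ i, e (Sum.inl i) = 0 := fun i =>
    Finsupp.mapDomain_notin_range _ _ (by simp)
  have hesupp : e.support = Finset.image Sum.inr d.support :=
    Finsupp.mapDomain_support_of_injective Sum.inr_injective _
  have hRHS : ∀ i, (((pderiv (Sum.inr i)).toLinearMap : Module.End ℚ (RKL K L)) ^ (d i))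
      (Mmat K L i (τ i))
      = monomial (Finsupp.single (Sum.inl i) (hookP K L (τ i))
          + Finsupp.single (Sum.inr i) (hookQ K L (τ i) - d i))
          (((hookQ K L (τ i)).descFactorial (d i) : ℕ) : ℚ) := by
    intro i
    rw [DyM, smul_monomial]
    norm_num
  rw [hprod, Dmon_monomial, smul_monomial]
  simp_rw [hRHS]
  rw [prod_monomial]
  have hexp : U - e = ∑ i, (Finsupp.single (Sum.inl i) (hookP K L (τ i))
      + Finsupp.single (Sum.inr i) (hookQ K L (τ i) - d i)) := by
    ext v
    rcases v with i | i
    · rw [Finsupp.tsub_apply, hUinl, hel, Nat.sub_zero, Finset.sum_apply']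
      simp [Finsupp.single_apply]
    · rw [Finsupp.tsub_apply, hUinr, hea, Finset.sum_apply']
      have hterm : ∀ x : Fin (K+L+1), ((Finsupp.single (Sum.inl x) (hookP K L (τ x))
          + Finsupp.single (Sum.inr x) (hookQ K L (τ x) - d x)) : _ →₀ ℕ) (Sum.inr i)
          = if x = i then hookQ K L (τ x) - d x else 0 := by
        intro x
        simp [Finsupp.single_apply]
        split_ifs <;> simp
      rw [Finset.sum_congr rfl (fun x _ => hterm x), Finset.sum_ite_eq' Finset.univ i]
      simp
  have hcoef : ((∏ v ∈ e.support, (U v).descFactorial (e v)) • (1:ℚ))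
      = ∏ i, (((hookQ K L (τ i)).descFactorial (d i) : ℕ) : ℚ) := by
    rw [nsmul_eq_mul, mul_one, ← Nat.cast_prod, Nat.cast_inj, hesupp,
      Finset.prod_image (fun a _ b _ hab => Sum.inr_injective hab)]
    simp only [hea, hUinr]
    apply Finset.prod_subset (Finset.subset_univ _)
    intro i _ hi
    rw [Finsupp.notMem_support_iff.mp hi, Nat.descFactorial_zero]
  rw [hexp, hcoef]

section Mats
variable (K L : ℕ) (A : Finset (Fin (K+L+1))) (k : ℕ)

def Nm : Matrix (Fin (K+L+1)) (Fin (K+L+1)) (PowerSeries (RKL K L)) :=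
  fun i j => if i ∈ A then
    ∑ s ∈ Finset.range (K+k+1),
      PowerSeries.C
        ((((pderiv (Sum.inr i)).toLinearMap : Module.End ℚ (RKL K L)) ^ s) (Mmat K L i j))
        * PowerSeries.X ^ s
  else PowerSeries.C (Mmat K L i j)

def pm1 {K L : ℕ} (j : Fin (K+L+1)) : Fin (K+L+1) :=
  ⟨(j:ℕ) - 1, lt_of_le_of_lt (Nat.sub_le _ _) j.isLt⟩

def Tm : Matrix (Fin (K+L+1)) (Fin (K+L+1)) (PowerSeries (RKL K L)) :=
  fun a b => if a = b then 1 else if (a:ℕ)+1 = (b:ℕ) ∧ (b:ℕ) ≤ K then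
    -(PowerSeries.C (((b:ℕ) : RKL K L)) * PowerSeries.X) else 0

def N'm : Matrix (Fin (K+L+1)) (Fin (K+L+1)) (PowerSeries (RKL K L)) :=
  fun i j => if i ∈ A then PowerSeries.C (Mmat K L i j)
  else PowerSeries.C (Mmat K L i j) -
    (if 1 ≤ (j:ℕ) ∧ (j:ℕ) ≤ K then
      PowerSeries.C (((j:ℕ) : RKL K L)) * PowerSeries.X
        * PowerSeries.C (Mmat K L i (pm1 j)) else 0)

lemma detT : (Tm K L).det = 1 := by
  rw [Matrix.det_of_upperTriangular]
  · simp [Tm]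
  · intro a b hba
    have hba' : (b:ℕ) < (a:ℕ) := by simpa using hba
    rw [Tm]
    have h1 : ¬ a = b := by
      intro h
      subst h
      exact lt_irrefl _ hba'
    have h2 : ¬ ((a:ℕ)+1 = (b:ℕ) ∧ (b:ℕ) ≤ K) := by
      rintro ⟨h, -⟩
      omega
    rw [if_neg h1, if_neg h2]

lemma rowT (j : Fin (K+L+1)) (v : Fin (K+L+1) → PowerSeries (RKL K L)) :
    ∑ a, v a * Tm K L a j
      = v j - (if 1 ≤ (j:ℕ) ∧ (j:ℕ) ≤ K then
          PowerSeries.C (((j:ℕ) : RKL K L)) * PowerSeries.X * v (pm1 j) else 0) := by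
  have hTsplit : ∀ a, Tm K L a j = (if a = j then 1 else 0)
      + (if a = pm1 j ∧ (1 ≤ (j:ℕ) ∧ (j:ℕ) ≤ K) then
          -(PowerSeries.C (((j:ℕ) : RKL K L)) * PowerSeries.X) else 0) := by
    intro a
    by_cases h1 : a = j
    · subst h1
      rw [Tm]
      have h2 : ¬ ((a:ℕ)+1 = (a:ℕ) ∧ (a:ℕ) ≤ K) := by rintro ⟨h, -⟩; omega
      have h3 : ¬ (a = pm1 a ∧ (1 ≤ (a:ℕ) ∧ (a:ℕ) ≤ K)) := by
        rintro ⟨h, h4, -⟩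
        have : (a:ℕ) = (a:ℕ) - 1 := congrArg Fin.val h
        omega
      rw [if_pos rfl, if_pos rfl, if_neg h3, add_zero]
    · rw [Tm, if_neg h1, if_neg h1, zero_add]
      congr 1
      rw [eq_iff_iff]
      constructor
      · rintro ⟨h2, h3⟩
        refine ⟨Fin.ext ?_, by omega, h3⟩
        simp [pm1]
        omega
      · rintro ⟨h2, h3, h4⟩
        have : (a:ℕ) = (j:ℕ) - 1 := congrArg Fin.val h2
        exact ⟨by omega, h4⟩
  simp_rw [hTsplit, mul_add, Finset.sum_add_distrib]
  by_cases hc : (1 ≤ (j:ℕ) ∧ (j:ℕ) ≤ K)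
  · simp only [hc, and_true, mul_ite, mul_one, mul_zero, mul_neg, if_true,
      Finset.sum_ite_eq', Finset.mem_univ]
    ring
  · simp [hc]

end Mats

lemma DyM2 (K L : ℕ) (i j : Fin (K+L+1)) (s : ℕ) (hq : (j:ℕ) ≤ K) :
    (((pderiv (Sum.inr i)).toLinearMap : Module.End ℚ (RKL K L)) ^ s) (Mmat K L i j)
      = ((j:ℕ).descFactorial s) • (X (Sum.inr i) ^ ((j:ℕ) - s) : RKL K L) := by
  rw [DyM]
  rw [hookP, if_pos hq, hookQ, if_pos hq]
  rw [Finsupp.single_zero, zero_add, X_pow_eq_monomial]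

lemma Nq0 (K L : ℕ) (A : Finset (Fin (K+L+1))) (k : ℕ) (i j : Fin (K+L+1))
    (hi : i ∈ A) (hq : hookQ K L j = 0) :
    Nm K L A k i j = PowerSeries.C (Mmat K L i j) := by
  rw [Nm, if_pos hi]
  rw [Finset.sum_eq_single_of_mem 0 (Finset.mem_range.mpr (by omega))]
  · simp
  · intro s _ hs
    obtain ⟨t, rfl⟩ := Nat.exists_eq_succ_of_ne_zero hs
    rw [DyM, hq]
    simp

lemma Ntel (K L : ℕ) (A : Finset (Fin (K+L+1))) (k : ℕ) (i j : Fin (K+L+1))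
    (hi : i ∈ A) (hj1 : 1 ≤ (j:ℕ)) (hjK : (j:ℕ) ≤ K) :
    Nm K L A k i j - PowerSeries.C (((j:ℕ) : RKL K L)) * PowerSeries.X
        * Nm K L A k i (pm1 j)
      = PowerSeries.C (Mmat K L i j) := by
  classical
  set B := K + k + 1 with hB
  set y : RKL K L := X (Sum.inr i) with hy
  set G : ℕ → PowerSeries (RKL K L) := fun t =>
    PowerSeries.C (((j:ℕ).descFactorial t) • y ^ ((j:ℕ) - t)) * PowerSeries.X ^ t with hG
  have hpm : ((pm1 j : Fin (K+L+1)) : ℕ) = (j:ℕ) - 1 := rfl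
  have hNj : Nm K L A k i j = ∑ s ∈ Finset.range B, G s := by
    rw [Nm, if_pos hi]
    apply Finset.sum_congr rfl
    intro s _
    rw [DyM2 K L i j s hjK]
  have hNpm : PowerSeries.C (((j:ℕ) : RKL K L)) * PowerSeries.X * Nm K L A k i (pm1 j)
      = ∑ s ∈ Finset.range B, G (s+1) := by
    rw [Nm, if_pos hi, Finset.mul_sum]
    apply Finset.sum_congr rfl
    intro s _
    rw [DyM2 K L i (pm1 j) s (by omega), hpm]
    have hd : (j:ℕ) * ((j:ℕ)-1).descFactorial s = (j:ℕ).descFactorial (s+1) := by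
      obtain ⟨m, hm⟩ := Nat.exists_eq_succ_of_ne_zero (by omega : (j:ℕ) ≠ 0)
      rw [hm, Nat.succ_descFactorial_succ, Nat.succ_sub_one]
    have hsub : (j:ℕ) - 1 - s = (j:ℕ) - (s+1) := by omega
    rw [hG]
    simp only []
    rw [hsub, ← hd]
    rw [nsmul_eq_mul, nsmul_eq_mul]
    push_cast
    simp only [map_mul]
    ring
  have hGB : G B = 0 := by
    rw [hG]
    simp only []
    rw [Nat.descFactorial_eq_zero_iff_lt.mpr (by omega)]
    simp
  have hshift : ∑ s ∈ Finset.range B, G (s+1) = (∑ s ∈ Finset.range B, G s) - G 0 := by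
    have h1 := Finset.sum_range_succ' G B
    have h2 := Finset.sum_range_succ G B
    rw [h2, hGB, add_zero] at h1
    -- h1 : ∑ s in range B, G s = (∑ s in range B, G (s+1)) + G 0
    rw [h1]
    ring
  have hG0 : G 0 = PowerSeries.C (Mmat K L i j) := by
    rw [hG]
    simp only []
    rw [Mmat, hookP, if_pos hjK, hookQ, if_pos hjK]
    simp [hy]
  rw [hNj, hNpm, hshift, hG0]
  ring

lemma mulNT (K L : ℕ) (A : Finset (Fin (K+L+1))) (k : ℕ) :
    Nm K L A k * Tm K L = N'm K L A := by
  refine Matrix.ext fun i j => ?_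
  rw [Matrix.mul_apply, rowT]
  by_cases hi : i ∈ A
  · rw [N'm, if_pos hi]
    by_cases hj : 1 ≤ (j:ℕ) ∧ (j:ℕ) ≤ K
    · rw [if_pos hj, Ntel K L A k i j hi hj.1 hj.2]
    · rw [if_neg hj, sub_zero]
      apply Nq0 K L A k i j hi
      rw [hookQ]
      split_ifs with h
      · omega
      · rfl
  · rw [N'm, if_neg hi]
    have hN : ∀ j', Nm K L A k i j' = PowerSeries.C (Mmat K L i j') := by
      intro j'
      rw [Nm, if_neg hi]
    rw [hN, hN]

lemma coeff_detN' (K L : ℕ) (A : Finset (Fin (K+L+1))) (k : ℕ)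
    (h : K + L + 1 < k + A.card) :
    PowerSeries.coeff k ((N'm K L A).det) = 0 := by
  classical
  rw [Matrix.det_apply, map_sum]
  apply Finset.sum_eq_zero
  intro σ _
  rw [Units.smul_def, map_zsmul]
  suffices hz : PowerSeries.coeff k (∏ i, N'm K L A (σ i) i) = 0 by
    rw [hz, smul_zero]
  rw [PowerSeries.coeff_prod]
  apply Finset.sum_eq_zero
  intro l hl
  rw [Finset.mem_finsuppAntidiag] at hl
  obtain ⟨hl1, hl2⟩ := hl
  have hAcard : A.card ≤ K + L + 1 := by
    simpa using Finset.card_le_card (Finset.subset_univ A)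
  have hbad : ¬ (∀ i, (σ i ∈ A → l i = 0) ∧ (σ i ∉ A → l i ≤ 1)) := by
    intro hall
    have hle : ∀ i : Fin (K+L+1), l i ≤ (if σ i ∈ A then 0 else 1) := by
      intro i
      by_cases hA : σ i ∈ A
      · simp [hA, (hall i).1 hA]
      · simp [hA, (hall i).2 hA]
    have hsum : Finset.univ.sum ⇑l ≤ ∑ i : Fin (K+L+1), (if σ i ∈ A then 0 else 1) :=
      Finset.sum_le_sum fun i _ => hle i
    have hcomp : ∑ i : Fin (K+L+1), (if σ i ∈ A then (0:ℕ) else 1)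
        = ∑ j : Fin (K+L+1), (if j ∈ A then (0:ℕ) else 1) :=
      Equiv.sum_comp σ (fun j => if j ∈ A then (0:ℕ) else 1)
    have hcard : ∑ j : Fin (K+L+1), (if j ∈ A then (0:ℕ) else 1)
        = (K + L + 1) - A.card := by
      have h1 : ∀ j : Fin (K+L+1), (if j ∈ A then (0:ℕ) else 1)
          = if j ∉ A then 1 else 0 := by
        intro j
        by_cases hj : j ∈ A <;> simp [hj]
      simp_rw [h1]
      rw [Finset.sum_ite, Finset.sum_const, Finset.sum_const, ← Finset.sdiff_eq_filter]
      rw [Finset.card_sdiff_of_subset (Finset.subset_univ A)]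
      simp
    omega
  push_neg at hbad
  obtain ⟨i, hi⟩ := hbad
  apply Finset.prod_eq_zero (Finset.mem_univ i)
  by_cases hA : σ i ∈ A
  · have hli : l i ≠ 0 := by
      intro h0
      exact (hi fun _ => h0).1 hA
    rw [N'm, if_pos hA, PowerSeries.coeff_C, if_neg hli]
  · have hli : 1 < l i := (hi fun hmem => absurd hmem hA).2
    rw [N'm, if_neg hA, map_sub, PowerSeries.coeff_C, if_neg (by omega : ¬ l i = 0)]
    rw [zero_sub, neg_eq_zero]
    by_cases hj : 1 ≤ (i:ℕ) ∧ (i:ℕ) ≤ K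
    · rw [if_pos hj, mul_right_comm, ← map_mul, PowerSeries.coeff_C_mul,
        PowerSeries.coeff_X, if_neg (by omega : ¬ l i = 1), mul_zero]
    · rw [if_neg hj, map_zero]

lemma coeff_Nm (K L : ℕ) (A : Finset (Fin (K+L+1))) (k : ℕ) (i j : Fin (K+L+1))
    (hi : i ∈ A) (t : ℕ) (ht : t < K + k + 1) :
    PowerSeries.coeff t (Nm K L A k i j)
      = (((pderiv (Sum.inr i)).toLinearMap : Module.End ℚ (RKL K L)) ^ t) (Mmat K L i j) := by
  rw [Nm, if_pos hi, map_sum]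
  rw [Finset.sum_eq_single_of_mem t (Finset.mem_range.mpr ht)]
  · rw [PowerSeries.coeff_C_mul, PowerSeries.coeff_X_pow, if_pos rfl, mul_one]
  · intro s _ hst
    rw [PowerSeries.coeff_C_mul, PowerSeries.coeff_X_pow, if_neg (Ne.symm hst), mul_zero]

lemma coeff_detN (K L : ℕ) (A : Finset (Fin (K+L+1))) (k : ℕ) :
    PowerSeries.coeff k ((Nm K L A k).det)
      = ∑ d ∈ A.finsuppAntidiag k, Dmon (Finsupp.mapDomain Sum.inr d) (Delta K L) := by
  classical
  have hDelta : Delta K L = (Mmat K L).det := rfl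
  rw [hDelta, Matrix.det_apply, Matrix.det_apply, map_sum]
  simp_rw [map_sum]
  rw [Finset.sum_comm]
  apply Finset.sum_congr rfl
  intro σ _
  rw [Units.smul_def, map_zsmul]
  have hre : ∀ (W : Matrix (Fin (K+L+1)) (Fin (K+L+1)) (PowerSeries (RKL K L))),
      ∏ i, W (σ i) i = ∏ i, W i (σ⁻¹ i) := by
    intro W
    rw [← Equiv.prod_comp σ (fun i => W i (σ⁻¹ i))]
    simp_rw [Equiv.Perm.inv_def, Equiv.symm_apply_apply]
  have hreM : ∀ (W : Matrix (Fin (K+L+1)) (Fin (K+L+1)) (RKL K L)),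
      ∏ i, W (σ i) i = ∏ i, W i (σ⁻¹ i) := by
    intro W
    rw [← Equiv.prod_comp σ (fun i => W i (σ⁻¹ i))]
    simp_rw [Equiv.Perm.inv_def, Equiv.symm_apply_apply]
  rw [hre, PowerSeries.coeff_prod]
  have hsub : A.finsuppAntidiag k ⊆ Finset.univ.finsuppAntidiag k := by
    intro l hl
    rw [Finset.mem_finsuppAntidiag] at hl ⊢
    refine ⟨?_, Finset.subset_univ _⟩
    rw [← Finset.sum_subset (Finset.subset_univ A) (fun x _ hx => Finsupp.notMem_support_iff.mp
      (fun hmem => hx (hl.2 hmem)))]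
    exact hl.1
  rw [← Finset.sum_subset hsub]
  · -- equal terms on the small set
    rw [Finset.smul_sum]
    apply Finset.sum_congr rfl
    intro l hl
    rw [Finset.mem_finsuppAntidiag] at hl
    rw [Units.smul_def, map_zsmul, hreM, lemP K L (fun i => σ⁻¹ i) l]
    congr 1
    apply Finset.prod_congr rfl
    intro i _
    by_cases hiA : i ∈ A
    · have hlk : l i ≤ k := by
        rw [← hl.1]
        exact Finset.single_le_sum (f := fun x => l x) (fun x _ => Nat.zero_le _)
          hiA
      exact coeff_Nm K L A k i (σ⁻¹ i) hiA (l i) (by omega)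
    · have hli0 : l i = 0 := by
        by_contra h0
        exact hiA (hl.2 (Finsupp.mem_support_iff.mpr h0))
      rw [hli0, pow_zero, Nm, if_neg hiA, PowerSeries.coeff_C, if_pos rfl,
        Module.End.one_apply]
  · -- vanishing off the small set
    intro l hlu hlA
    rw [Finset.mem_finsuppAntidiag] at hlu
    have hns : ¬ l.support ⊆ A := by
      intro hsupp
      apply hlA
      rw [Finset.mem_finsuppAntidiag]
      refine ⟨?_, hsupp⟩
      rw [Finset.sum_subset (Finset.subset_univ A) (fun x _ hx => Finsupp.notMem_support_iff.mp
        (fun hmem => hx (hsupp hmem)))]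
      exact hlu.1
    obtain ⟨i, hisupp, hiA⟩ := Finset.not_subset.mp hns
    apply Finset.prod_eq_zero (Finset.mem_univ i)
    rw [Nm, if_neg hiA, PowerSeries.coeff_C,
      if_neg (Finsupp.mem_support_iff.mp hisupp)]

/-- Proposition 1: if `k > 0` and `k + |A| > n` then `h_k(∂yᵢ : i ∈ A) Δ_μ = 0`, i.e.
`∑_d ∏_{i ∈ A} (∂yᵢ)^(dᵢ) Δ_μ = 0`, the sum being over all families `(dᵢ)_{i ∈ A}` of
nonnegative integers with `∑ dᵢ = k`. -/
theorem stmt5 (K L : ℕ) (A : Finset (Fin (K + L + 1))) (k : ℕ) (hk : 0 < k)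
    (h : K + L + 1 < k + A.card) :
    ∑ d ∈ A.finsuppAntidiag k,
      Dmon (Finsupp.mapDomain Sum.inr d) (Delta K L) = 0 := by
  have h2 : (Nm K L A k).det = (N'm K L A).det := by
    rw [← mulNT K L A k, Matrix.det_mul, detT, mul_one]
  rw [← coeff_detN K L A k, h2, coeff_detN' K L A k h]
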